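/- Let m ≥ r ≥ 3 and 0 ≤ f ≤ C(m,r). If (m,f) cannot be realised as the vertex-disjoint union of a complete r-graph and an r-graph with at most m edges, then σ_r(m,f) = 0. In particular, if there is no x ∈ {0,…,m} with 0 ≤ f − C(x,r) < m, then σ_r(m,f) = 0. -/

import Mathlib

open Finset
open scoped Classical

/-- `(n,e) →_r (m,f)`: every `r`-uniform hypergraph on `n` vertices with `e` edges
has an induced sub-hypergraph on `m` vertices with exactly `f` edges. -/
def PairArrows (r n e m f : ℕ) : Prop :=
  ∀ G : Finset (Finset (Fin n)), (∀ s ∈ G, s.card = r) → G.card = e →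
    ∃ S : Finset (Fin n), S.card = m ∧ (G.filter (fun t => t ⊆ S)).card = f

/-- The density `σ_r(m,f)`. -/
noncomputable def sigmaR (r m f : ℕ) : ℝ :=
  Filter.limsup
    (fun n : ℕ =>
      (((Finset.range (n.choose r + 1)).filter (fun e => PairArrows r n e m f)).card : ℝ) /
        (n.choose r : ℝ))
    Filter.atTop
/-- The pair `(m,f)` can be realised as the vertex-disjoint union of a complete
`r`-graph and an `r`-graph with at most `m` edges. -/
def CliquePlusFew (r m f : ℕ) : Prop :=
  ∃ (K : Finset (Fin m)) (H : Finset (Finset (Fin m))),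
    (∀ s ∈ H, s.card = r ∧ Disjoint s K) ∧ H.card ≤ m ∧
    K.card.choose r + H.card = f

namespace SigmaZeroAux

variable {α : Type*} [DecidableEq α]

/-- A bad configuration: a nonempty family of at most `m` sets spanning
at most as many vertices as it has members. -/
def Bad (m : ℕ) (F : Finset (Finset α)) : Prop :=
  F.Nonempty ∧ F.card ≤ m ∧ (F.biUnion id).card ≤ F.card

/-- A family is clean if it contains no bad subfamily. -/
def Clean (m : ℕ) (E : Finset (Finset α)) : Prop := ∀ F, F ⊆ E → ¬ Bad m F

lemma Clean.mono {m : ℕ} {E E' : Finset (Finset α)} (h : Clean m E) (hE : E' ⊆ E) :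
    Clean m E' := fun F hF => h F (hF.trans hE)

lemma Clean.filter_lt {m : ℕ} {E : Finset (Finset α)} (h : Clean m E) {S : Finset α}
    (hS : S.card ≤ m) (hS1 : 1 ≤ S.card) :
    (E.filter (fun t => t ⊆ S)).card = 0 ∨ (E.filter (fun t => t ⊆ S)).card < S.card := by
  by_contra hcon
  push_neg at hcon
  obtain ⟨h0, hge⟩ := hcon
  obtain ⟨F, hFsub, hFcard⟩ := Finset.exists_subset_card_eq hge
  refine h F (hFsub.trans (Finset.filter_subset _ _)) ⟨?_, ?_, ?_⟩
  · rw [← Finset.card_pos, hFcard]; omega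
  · omega
  · have hsub2 : F.biUnion id ⊆ S := by
      intro v hv
      rw [Finset.mem_biUnion] at hv
      obtain ⟨s, hsF, hvs⟩ := hv
      exact (Finset.mem_filter.1 (hFsub hsF)).2 hvs
    have := Finset.card_le_card hsub2
    omega

lemma exists_clean_subset (m : ℕ) (E : Finset (Finset α)) :
    ∃ E' , E' ⊆ E ∧ Clean m E' ∧ E.card ≤ E'.card + (E.powerset.filter (Bad m)).card := by
  classical
  set Bs := E.powerset.filter (Bad m) with hBs
  set pick : Finset (Finset α) → Finset α := fun F => if h : F.Nonempty then h.choose else ∅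
    with hpick
  set D := Bs.image pick with hD
  refine ⟨E \ D, Finset.sdiff_subset, ?_, ?_⟩
  · intro F hF hbad
    have hFE : F ⊆ E := hF.trans Finset.sdiff_subset
    have hmem : F ∈ Bs := by
      rw [hBs, Finset.mem_filter, Finset.mem_powerset]; exact ⟨hFE, hbad⟩
    have hne : F.Nonempty := hbad.1
    have hrep : pick F ∈ F := by rw [hpick]; simp only [dif_pos hne]; exact hne.choose_spec
    have hrepD : pick F ∈ D := Finset.mem_image_of_mem _ hmem
    have := hF hrep
    rw [Finset.mem_sdiff] at this
    exact this.2 hrepD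
  · calc E.card ≤ (E \ D).card + D.card := Finset.card_le_card_sdiff_add_card
      _ ≤ (E \ D).card + Bs.card := by
          gcongr
          exact Finset.card_image_le

lemma choose_sub_anti {N T : ℕ} : ∀ {u k : ℕ}, u ≤ k → k ≤ N →
    (N - k).choose (T - k) ≤ (N - u).choose (T - u) := by
  intro u k
  induction k with
  | zero =>
    intro h _
    obtain rfl := Nat.le_zero.mp h
    exact le_rfl
  | succ k ih =>
    intro huk hkN
    rcases Nat.eq_or_lt_of_le huk with rfl | hlt
    · exact le_rfl
    · refine le_trans ?_ (ih (by omega) (by omega))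
      rcases Nat.eq_zero_or_pos (T - k) with h0 | hpos
      · have h1 : T - (k+1) = 0 := by omega
        rw [h0, h1]
        simp
      · have hNk : N - k = (N - (k+1)) + 1 := by omega
        have hTk : T - k = (T - (k+1)) + 1 := by omega
        rw [hNk, hTk, Nat.choose_succ_succ]
        exact Nat.le_add_right _ _

lemma choose_descFactorial (N T : ℕ) (hT : T ≤ N) :
    ∀ u, u ≤ T → N.choose T * T.descFactorial u = (N - u).choose (T - u) * N.descFactorial u := by
  intro u
  induction u with
  | zero => simp
  | succ u ih =>
    intro hu
    have hu' : u ≤ T := by omega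
    rw [Nat.descFactorial_succ, Nat.descFactorial_succ]
    have key : (N - u) * ((N - u - 1).choose (T - u - 1)) = (N - u).choose (T - u) * (T - u) := by
      have h1 : N - u = (N - u - 1) + 1 := by omega
      have h2 : T - u = (T - u - 1) + 1 := by omega
      rw [h1, h2]
      exact Nat.add_one_mul_choose_eq _ _
    calc N.choose T * ((T - u) * T.descFactorial u)
        = (N.choose T * T.descFactorial u) * (T - u) := by ring
      _ = ((N-u).choose (T-u) * N.descFactorial u) * (T - u) := by rw [ih hu']
      _ = ((N-u).choose (T-u) * (T-u)) * N.descFactorial u := by ring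
      _ = ((N - u) * ((N - u - 1).choose (T - u - 1))) * N.descFactorial u := by rw [key]
      _ = (N - (u+1)).choose (T - (u+1)) * ((N - u) * N.descFactorial u) := by
          rw [show N - u - 1 = N - (u+1) by omega, show T - u - 1 = T - (u+1) by omega]; ring

lemma term_le {a N T u m r L c : ℕ} (hum : u ≤ m) (hmT : m ≤ T) (hTN : T ≤ N)
    (hmN : m < N) (hc : u.choose r ≤ c) (hL : a * T ≤ L * (N - m)) :
    a.choose u * (2 ^ (u.choose r) * (N - u).choose (T - u)) ≤ 2 ^ c * L ^ u * N.choose T := by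
  have hNu : 0 < (N - u) ^ u := Nat.pow_pos (by omega)
  apply Nat.le_of_mul_le_mul_right _ hNu
  have hsub : (N - u) ^ u ≤ N.descFactorial u :=
    le_trans (Nat.pow_le_pow_left (by omega) u) (Nat.pow_sub_le_descFactorial N u)
  calc a.choose u * (2 ^ (u.choose r) * (N - u).choose (T - u)) * (N - u) ^ u
      = (a.choose u) * 2 ^ (u.choose r) * ((N - u).choose (T - u) * (N - u) ^ u) := by ring
    _ ≤ a ^ u * 2 ^ c * (N.choose T * T ^ u) := by
        have h1 : (N - u).choose (T - u) * (N - u) ^ u ≤ N.choose T * T ^ u := by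
          calc (N - u).choose (T - u) * (N - u) ^ u
              ≤ (N - u).choose (T - u) * N.descFactorial u := by gcongr
            _ = N.choose T * T.descFactorial u :=
                (choose_descFactorial N T hTN u (by omega)).symm
            _ ≤ N.choose T * T ^ u := by
                gcongr
                exact Nat.descFactorial_le_pow _ _
        exact Nat.mul_le_mul (Nat.mul_le_mul (Nat.choose_le_pow _ _)
          (Nat.pow_le_pow_right (by norm_num) hc)) h1
    _ = N.choose T * ((a * T) ^ u * 2 ^ c) := by rw [mul_pow]; ring
    _ ≤ N.choose T * ((L * (N - u)) ^ u * 2 ^ c) := by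
        have h2 : a * T ≤ L * (N - u) := hL.trans (Nat.mul_le_mul le_rfl (Nat.sub_le_sub_left hum N))
        gcongr
    _ = 2 ^ c * L ^ u * N.choose T * (N - u) ^ u := by rw [mul_pow]; ring


lemma sum_badcount_le (r m T : ℕ) (hr : 1 ≤ r) (A : Finset α)
    (hmN : m ≤ (A.powersetCard r).card) :
    ∑ E ∈ (A.powersetCard r).powersetCard T, (E.powerset.filter (Bad m)).card ≤
      ∑ u ∈ Finset.Icc 1 m,
        A.card.choose u * (2 ^ (u.choose r) * (((A.powersetCard r).card - u).choose (T - u))) := by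
  classical
  set Ω := A.powersetCard r with hΩ
  set N := Ω.card with hN
  set P := Ω.powersetCard T with hP
  set BΩ := Ω.powerset.filter (Bad m) with hBΩ
  have step1 : ∀ E ∈ P, (E.powerset.filter (Bad m)).card = (BΩ.filter (fun F => F ⊆ E)).card := by
    intro E hE
    have hEΩ : E ⊆ Ω := (Finset.mem_powersetCard.1 hE).1
    congr 1
    ext F
    simp only [hBΩ, Finset.mem_filter, Finset.mem_powerset]
    constructor
    · rintro ⟨h1, h2⟩; exact ⟨⟨h1.trans hEΩ, h2⟩, h1⟩
    · rintro ⟨⟨_, h2⟩, h3⟩; exact ⟨h3, h2⟩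
  rw [Finset.sum_congr rfl step1]
  have step2 : ∑ E ∈ P, (BΩ.filter (fun F => F ⊆ E)).card
      = ∑ F ∈ BΩ, (P.filter (fun E => F ⊆ E)).card := by
    simp_rw [Finset.card_filter]
    exact Finset.sum_comm
  rw [step2]
  have step3 : ∀ F ∈ BΩ, (P.filter (fun E => F ⊆ E)).card ≤
      (N - (F.biUnion id).card).choose (T - (F.biUnion id).card) := by
    intro F hF
    rw [hBΩ, Finset.mem_filter, Finset.mem_powerset] at hF
    obtain ⟨hFΩ, hbad⟩ := hF
    have hb1 : (P.filter (fun E => F ⊆ E)).card ≤ (N - F.card).choose (T - F.card) := by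
      have hinj : (P.filter (fun E => F ⊆ E)).card ≤ ((Ω \ F).powersetCard (T - F.card)).card := by
        apply Finset.card_le_card_of_injOn (fun E => E \ F)
        · intro E hE
          rw [Finset.mem_coe, Finset.mem_filter, hP, Finset.mem_powersetCard] at hE
          rw [Finset.mem_coe, Finset.mem_powersetCard]
          exact ⟨Finset.sdiff_subset_sdiff hE.1.1 le_rfl,
            by rw [Finset.card_sdiff_of_subset hE.2, hE.1.2]⟩
        · intro E1 h1 E2 h2 he
          rw [Finset.mem_coe, Finset.mem_filter] at h1 h2
          have := congrArg (· ∪ F) he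
          simpa [Finset.sdiff_union_of_subset h1.2, Finset.sdiff_union_of_subset h2.2] using this
      refine hinj.trans ?_
      rw [Finset.card_powersetCard, Finset.card_sdiff_of_subset hFΩ]
    refine hb1.trans (choose_sub_anti hbad.2.2 (hbad.2.1.trans hmN))
  refine (Finset.sum_le_sum step3).trans ?_
  set V := A.powerset.filter (fun U => 1 ≤ U.card ∧ U.card ≤ m) with hV
  have hmaps : ∀ F ∈ BΩ, F.biUnion id ∈ V := by
    intro F hF
    rw [hBΩ, Finset.mem_filter, Finset.mem_powerset] at hF
    have hFΩ := hF.1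
    have hbad : Bad m F := hF.2
    have hne : F.Nonempty := hbad.1
    have hcard : F.card ≤ m := hbad.2.1
    have hble : (F.biUnion id).card ≤ F.card := hbad.2.2
    rw [hV, Finset.mem_filter, Finset.mem_powerset]
    refine ⟨?_, ?_, hble.trans hcard⟩
    · intro v hv
      rw [Finset.mem_biUnion] at hv
      obtain ⟨s, hs, hvs⟩ := hv
      exact (Finset.mem_powersetCard.1 (hFΩ hs)).1 hvs
    · obtain ⟨s, hs⟩ := hne
      have hscard : s.card = r := (Finset.mem_powersetCard.1 (hFΩ hs)).2
      have hsub : s ⊆ F.biUnion id := fun v hv => Finset.mem_biUnion.2 ⟨s, hs, hv⟩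
      have := Finset.card_le_card hsub
      omega
  rw [← Finset.sum_fiberwise_of_maps_to hmaps
    (fun F => (N - (F.biUnion id).card).choose (T - (F.biUnion id).card))]
  have inner : ∀ U ∈ V,
      (∑ F ∈ BΩ.filter (fun F => F.biUnion id = U),
        (N - (F.biUnion id).card).choose (T - (F.biUnion id).card))
      ≤ 2 ^ (U.card.choose r) * (N - U.card).choose (T - U.card) := by
    intro U hU
    have hcong : ∀ F ∈ BΩ.filter (fun F => F.biUnion id = U),
        (N - (F.biUnion id).card).choose (T - (F.biUnion id).card)
          = (N - U.card).choose (T - U.card) := by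
      intro F hF
      rw [(Finset.mem_filter.1 hF).2]
    rw [Finset.sum_congr rfl hcong, Finset.sum_const, smul_eq_mul]
    have hfib : BΩ.filter (fun F => F.biUnion id = U) ⊆ (U.powersetCard r).powerset := by
      intro F hF
      rw [Finset.mem_filter] at hF
      obtain ⟨hFB, hFU⟩ := hF
      rw [hBΩ, Finset.mem_filter, Finset.mem_powerset] at hFB
      rw [Finset.mem_powerset]
      intro s hs
      rw [Finset.mem_powersetCard]
      constructor
      · rw [← hFU]
        exact fun v hv => Finset.mem_biUnion.2 ⟨s, hs, hv⟩
      · exact (Finset.mem_powersetCard.1 (hFB.1 hs)).2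
    have hcard2 := Finset.card_le_card hfib
    rw [Finset.card_powerset, Finset.card_powersetCard] at hcard2
    exact Nat.mul_le_mul_right _ hcard2
  refine (Finset.sum_le_sum inner).trans ?_
  have hmaps2 : ∀ U ∈ V, U.card ∈ Finset.Icc 1 m := by
    intro U hU
    rw [hV, Finset.mem_filter] at hU
    rw [Finset.mem_Icc]
    exact hU.2
  rw [← Finset.sum_fiberwise_of_maps_to hmaps2
    (fun U => 2 ^ (U.card.choose r) * (N - U.card).choose (T - U.card))]
  apply Finset.sum_le_sum
  intro u hu
  have hcong : ∀ U ∈ V.filter (fun U => U.card = u),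
      2 ^ (U.card.choose r) * (N - U.card).choose (T - U.card)
        = 2 ^ (u.choose r) * (N - u).choose (T - u) := by
    intro U hU
    rw [(Finset.mem_filter.1 hU).2]
  rw [Finset.sum_congr rfl hcong, Finset.sum_const, smul_eq_mul]
  have hfib2 : V.filter (fun U => U.card = u) ⊆ A.powersetCard u := by
    intro U hU
    rw [Finset.mem_filter, hV, Finset.mem_filter, Finset.mem_powerset] at hU
    rw [Finset.mem_powersetCard]
    exact ⟨hU.1.1, hU.2⟩
  have := Finset.card_le_card hfib2
  rw [Finset.card_powersetCard] at this
  exact Nat.mul_le_mul_right _ this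


lemma exists_clean (r m L T : ℕ) (hr : 1 ≤ r) (hm : 1 ≤ m) (hL : 1 ≤ L) (A : Finset α)
    (hmT : m ≤ T) (hTN : T ≤ A.card.choose r) (hmN : m < A.card.choose r)
    (hmaster : A.card * T ≤ L * (A.card.choose r - m)) :
    ∃ E, E ⊆ A.powersetCard r ∧ Clean m E ∧
      T ≤ E.card + m * (2 ^ m.choose r * L ^ m) := by
  classical
  have hNcard : (A.powersetCard r).card = A.card.choose r := Finset.card_powersetCard r A
  have hPne : ((A.powersetCard r).powersetCard T).Nonempty :=
    Finset.powersetCard_nonempty.2 (by rw [hNcard]; exact hTN)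
  set C0 := m * (2 ^ m.choose r * L ^ m) with hC0
  have hsum : ∑ E ∈ (A.powersetCard r).powersetCard T, (E.powerset.filter (Bad m)).card
      ≤ ∑ _E ∈ (A.powersetCard r).powersetCard T, C0 := by
    rw [Finset.sum_const, smul_eq_mul, Finset.card_powersetCard, hNcard]
    refine (sum_badcount_le r m T hr A (by rw [hNcard]; omega)).trans ?_
    have hterm : ∀ u ∈ Finset.Icc 1 m,
        A.card.choose u * (2 ^ (u.choose r) * (((A.powersetCard r).card - u).choose (T - u)))
          ≤ 2 ^ m.choose r * L ^ m * (A.card.choose r).choose T := by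
      intro u hu
      rw [Finset.mem_Icc] at hu
      rw [hNcard]
      refine (term_le hu.2 hmT hTN hmN (Nat.choose_le_choose r hu.2) hmaster).trans ?_
      have : L ^ u ≤ L ^ m := Nat.pow_le_pow_right hL hu.2
      exact Nat.mul_le_mul_right _ (Nat.mul_le_mul_left _ this)
    refine (Finset.sum_le_sum hterm).trans ?_
    rw [Finset.sum_const, Nat.card_Icc, smul_eq_mul]
    have : m + 1 - 1 = m := by omega
    rw [this, hC0]
    ring_nf
    exact le_rfl
  obtain ⟨E0, hE0mem, hE0bad⟩ := Finset.exists_le_of_sum_le hPne hsum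
  rw [Finset.mem_powersetCard] at hE0mem
  obtain ⟨E', hE'sub, hclean, hcard⟩ := exists_clean_subset m E0
  refine ⟨E', hE'sub.trans hE0mem.1, hclean, ?_⟩
  calc T = E0.card := hE0mem.2.symm
    _ ≤ E'.card + (E0.powerset.filter (Bad m)).card := hcard
    _ ≤ E'.card + C0 := by omega


lemma card_filter_val_lt (n x : ℕ) (hx : x ≤ n) :
    ((Finset.univ : Finset (Fin n)).filter (fun v : Fin n => (v : ℕ) < x)).card = x := by
  have hmem : ∀ a ∈ Finset.range x, a < n := fun a ha => lt_of_lt_of_le (mem_range.1 ha) hx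
  have : ((Finset.univ : Finset (Fin n)).filter (fun v : Fin n => (v : ℕ) < x))
      = Finset.attachFin (Finset.range x) hmem := by
    ext v
    simp [Finset.mem_attachFin]
  rw [this, Finset.card_attachFin, Finset.card_range]

lemma card_filter_val_ge (n a : ℕ) :
    ((Finset.univ : Finset (Fin n)).filter (fun v : Fin n => a ≤ (v : ℕ))).card = n - a := by
  have hmem : ∀ b ∈ Finset.Ico a n, b < n := fun b hb => (Finset.mem_Ico.1 hb).2
  have : ((Finset.univ : Finset (Fin n)).filter (fun v : Fin n => a ≤ (v : ℕ)))
      = Finset.attachFin (Finset.Ico a n) hmem := by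
    ext v
    simp [Finset.mem_attachFin, Finset.mem_Ico, v.isLt]
  rw [this, Finset.card_attachFin, Nat.card_Ico]

/-- The core construction: a clique on the first `x` vertices plus a clean family
on high vertices witnesses failure of arrowing unless `(m,f)` is clique-plus-few. -/
lemma construct {r m f n x : ℕ} (hr : 3 ≤ r) (hm : 3 ≤ m) (hx : x ≤ n)
    (E : Finset (Finset (Fin n)))
    (hEr : ∀ s ∈ E, s.card = r)
    (hEx : ∀ s ∈ E, ∀ v ∈ s, x ≤ (v : ℕ))
    (hclean : Clean m E)
    (harrow : PairArrows r n (x.choose r + E.card) m f) :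
    CliquePlusFew r m f ∧ ∃ y ≤ m, y.choose r ≤ f ∧ f < y.choose r + m := by
  classical
  set Cl : Finset (Fin n) := Finset.univ.filter (fun v : Fin n => (v : ℕ) < x) with hCl
  have hClcard : Cl.card = x := card_filter_val_lt n x hx
  set G := Cl.powersetCard r ∪ E with hG
  have hdisj : Disjoint (Cl.powersetCard r) E := by
    rw [Finset.disjoint_left]
    intro s hs hsE
    rw [Finset.mem_powersetCard] at hs
    have hcard := hEr s hsE
    have hne : s.Nonempty := by rw [← Finset.card_pos, hcard]; omega
    obtain ⟨v, hv⟩ := hne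
    have h1 := hs.1 hv
    rw [hCl, Finset.mem_filter] at h1
    have h2 := hEx s hsE v hv
    omega
  have hGr : ∀ s ∈ G, s.card = r := by
    intro s hs
    rw [hG, Finset.mem_union] at hs
    rcases hs with hs | hs
    · exact (Finset.mem_powersetCard.1 hs).2
    · exact hEr s hs
  have hGcard : G.card = x.choose r + E.card := by
    rw [hG, Finset.card_union_of_disjoint hdisj, Finset.card_powersetCard, hClcard]
  obtain ⟨S, hScard, hSf⟩ := harrow G hGr hGcard
  set y := (Cl ∩ S).card with hy
  have hclique : (Cl.powersetCard r).filter (fun t => t ⊆ S) = (Cl ∩ S).powersetCard r := by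
    ext t
    simp only [Finset.mem_filter, Finset.mem_powersetCard, Finset.subset_inter_iff]
    tauto
  set h := (E.filter (fun t => t ⊆ S)).card with hh
  have hf : y.choose r + h = f := by
    rw [← hSf, hG, Finset.filter_union,
      Finset.card_union_of_disjoint (Finset.disjoint_filter_filter hdisj), hclique,
      Finset.card_powersetCard]
  have hhm : h < m := by
    rcases hclean.filter_lt (S := S) (by omega) (by omega) with h0 | hlt
    · omega
    · omega
  have hym : y ≤ m := by
    rw [hy, ← hScard]
    exact Finset.card_le_card Finset.inter_subset_right
  have hmpos : 0 < m := by omega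
  constructor
  · -- CliquePlusFew
    set eS := S.equivFinOfCardEq hScard with heS
    set ψ : Fin n → Fin m := fun v => if hv : v ∈ S then eS ⟨v, hv⟩ else ⟨0, hmpos⟩ with hψ
    have hinj : Set.InjOn ψ ↑S := by
      intro a ha b hb hab
      rw [Finset.mem_coe] at ha hb
      rw [hψ] at hab
      simp only [dif_pos ha, dif_pos hb] at hab
      exact congrArg Subtype.val (eS.injective hab)
    have himg : ∀ s1 s2 : Finset (Fin n), s1 ⊆ S → s2 ⊆ S →
        s1.image ψ = s2.image ψ → s1 = s2 := by
      intro s1 s2 h1 h2 he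
      apply Finset.Subset.antisymm
      · intro v hv
        have : ψ v ∈ s2.image ψ := he ▸ Finset.mem_image_of_mem ψ hv
        obtain ⟨w, hw, hwv⟩ := Finset.mem_image.1 this
        rwa [hinj (h2 hw) (h1 hv) hwv] at hw
      · intro v hv
        have : ψ v ∈ s1.image ψ := he ▸ Finset.mem_image_of_mem ψ hv
        obtain ⟨w, hw, hwv⟩ := Finset.mem_image.1 this
        rwa [hinj (h1 hw) (h2 hv) hwv] at hw
    refine ⟨(Cl ∩ S).image ψ, (E.filter (fun t => t ⊆ S)).image (fun t => t.image ψ),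
      ?_, ?_, ?_⟩
    · intro s' hs'
      rw [Finset.mem_image] at hs'
      obtain ⟨s, hsmem, rfl⟩ := hs'
      rw [Finset.mem_filter] at hsmem
      obtain ⟨hsE, hsS⟩ := hsmem
      constructor
      · rw [Finset.card_image_of_injOn (hinj.mono (by exact_mod_cast hsS))]
        exact hEr s hsE
      · rw [Finset.disjoint_left]
        rintro w hw1 hw2
        rw [Finset.mem_image] at hw1 hw2
        obtain ⟨v1, hv1, he1⟩ := hw1
        obtain ⟨v2, hv2, he2⟩ := hw2
        have hv1S : v1 ∈ S := hsS hv1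
        have hv2m := Finset.mem_inter.1 hv2
        have hv2S : v2 ∈ S := hv2m.2
        have hveq : v1 = v2 := hinj hv1S hv2S (he1.trans he2.symm)
        have hxle := hEx s hsE v1 hv1
        have hlt : (v2 : ℕ) < x := by
          have := hv2m.1
          rw [hCl, Finset.mem_filter] at this
          exact this.2
        rw [hveq] at hxle
        omega
    · have hHcard : ((E.filter (fun t => t ⊆ S)).image (fun t => t.image ψ)).card = h := by
        rw [hh]
        apply Finset.card_image_of_injOn
        intro s1 h1 s2 h2 he
        rw [Finset.mem_coe, Finset.mem_filter] at h1 h2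
        exact himg s1 s2 h1.2 h2.2 he
      omega
    · have hKcard : ((Cl ∩ S).image ψ).card = y := by
        rw [hy]
        apply Finset.card_image_of_injOn
        exact hinj.mono (by exact_mod_cast Finset.inter_subset_right)
      have hHcard : ((E.filter (fun t => t ⊆ S)).image (fun t => t.image ψ)).card = h := by
        rw [hh]
        apply Finset.card_image_of_injOn
        intro s1 h1 s2 h2 he
        rw [Finset.mem_coe, Finset.mem_filter] at h1 h2
        exact himg s1 s2 h1.2 h2.2 he
      rw [hKcard, hHcard]
      exact hf
  · exact ⟨y, hym, by omega, by omega⟩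


lemma main_bound (r m f : ℕ) (hr : 3 ≤ r) (hm : r ≤ m)
    (hnot : ¬(CliquePlusFew r m f ∧ ∃ x ≤ m, x.choose r ≤ f ∧ f < x.choose r + m))
    (q : ℕ) (hq : 2 ≤ q) :
    ∃ N0, ∀ n, N0 ≤ n → ∀ e, e ≤ (n - n / q).choose r → ¬ PairArrows r n e m f := by
  classical
  obtain ⟨r', rfl⟩ : ∃ r', r = r' + 1 := ⟨r - 1, by omega⟩
  set r := r' + 1 with hrdef
  set K := r.factorial * (2*q)^r with hK
  set L := 3 * K with hL
  set C0 := m * (2 ^ m.choose r * L ^ m) with hC0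
  have hq0 : 0 < q := by omega
  have hK1 : 1 ≤ K := Nat.mul_pos r.factorial_pos (Nat.pow_pos (by omega))
  have hL1 : 1 ≤ L := by omega
  refine ⟨q + 2*q*r + C0 + 2*K + m + 2 + L*m + K*(m+1) + 2*r + 2, ?_⟩
  intro n hn
  set d := n / q with hd
  have hd_le : d ≤ n := Nat.div_le_self n q
  have hdn2 : d ≤ n / 2 := Nat.div_le_div_left hq (by norm_num)
  have F1 : q * d + n % q = n := Nat.div_add_mod n q
  have F2 : n % q < q := Nat.mod_lt n hq0
  have hr1 : r - 1 + 1 = r := by omega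
  have F3 : q * (r - 1) + q = q * r := by
    calc q * (r - 1) + q = q * ((r - 1) + 1) := by ring
      _ = q * r := by rw [hr1]
  have F4 : 2*(q*r) + q ≤ n := by
    have : 2*q*r = 2*(q*r) := by ring
    omega
  have hd1 : 1 ≤ d := by
    rw [hd]
    rw [Nat.one_le_div_iff hq0]
    omega
  have hrd : r ≤ d := by
    by_contra hcon
    push_neg at hcon
    have F5 : q * d ≤ q * (r - 1) := Nat.mul_le_mul_left q (by omega)
    omega
  have key0 : n ≤ 2 * (q * (d + 1 - r)) := by
    have F6 : q * (d + 1 - r) + q * r = q * (d + 1) := by rw [← Nat.mul_add]; congr 1; omega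
    have F7 : q * (d + 1) = q * d + q := by ring
    omega
  have hCd : n ^ r ≤ K * d.choose r := by
    calc n ^ r ≤ (2 * (q * (d + 1 - r))) ^ r := Nat.pow_le_pow_left key0 r
      _ = (2*q) ^ r * (d + 1 - r) ^ r := by rw [← mul_assoc, mul_pow]
      _ ≤ (2*q) ^ r * d.descFactorial r := by
          gcongr
          exact Nat.pow_sub_le_descFactorial d r
      _ = (2*q) ^ r * (r.factorial * d.choose r) := by
          rw [Nat.descFactorial_eq_factorial_mul_choose]
      _ = K * d.choose r := by rw [hK]; ring
  set T := n.choose (r - 1) + C0 with hT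
  have hch_pow : n.choose (r-1) ≤ n ^ (r-1) := Nat.choose_le_pow n (r-1)
  have hnr1 : n ≤ n ^ (r - 1) := by
    rcases Nat.eq_or_lt_of_le hr with h3 | h3
    · have : r - 1 = 2 := by omega
      rw [this]
      nlinarith [Nat.one_le_iff_ne_zero.2 (show n ≠ 0 by omega)]
    · exact Nat.le_self_pow (by omega) n
  have hTub : T ≤ 2 * n ^ (r-1) := by
    have hC0n : C0 ≤ n := by omega
    omega
  have hn_pow : n ^ r = n ^ (r-1) * n := by
    conv_lhs => rw [← hr1]
    rw [pow_succ]
  have hnnr : n ≤ n ^ r := Nat.le_self_pow (by omega) n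
  have hTN : T ≤ d.choose r := by
    have h1 : K * T ≤ K * (2 * n ^ (r-1)) := Nat.mul_le_mul_left K hTub
    have h3 : (2*K) * n ^ (r-1) ≤ n * n ^ (r-1) := Nat.mul_le_mul_right _ (by omega)
    have h4 : K * (2 * n ^ (r-1)) = (2*K) * n ^ (r-1) := by ring
    have h5 : n * n ^ (r-1) = n ^ r := by rw [hn_pow]; ring
    have : K * T ≤ K * d.choose r := by
      calc K * T ≤ (2*K) * n ^ (r-1) := by omega
        _ ≤ n ^ r := by omega
        _ ≤ K * d.choose r := hCd
    exact Nat.le_of_mul_le_mul_left this (by omega)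
  have hmCd : m < d.choose r := by
    have h1 : K * (m + 1) ≤ n := by omega
    have : K * (m+1) ≤ K * d.choose r := le_trans (h1.trans hnnr) hCd
    have := Nat.le_of_mul_le_mul_left this (by omega)
    omega
  have hmT : m ≤ T := by
    have : 1 ≤ 2 ^ m.choose r * L ^ m :=
      Nat.mul_pos (Nat.pow_pos (by omega)) (Nat.pow_pos (by omega))
    have : m * 1 ≤ m * (2 ^ m.choose r * L ^ m) := Nat.mul_le_mul_left m this
    omega
  have hmaster : d * T ≤ L * (d.choose r - m) := by
    have h5 : d * T ≤ n * (2 * n ^ (r-1)) := Nat.mul_le_mul hd_le hTub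
    have h6 : n * (2 * n ^ (r-1)) = 2 * n ^ r := by rw [hn_pow]; ring
    have h7 : L * m ≤ n ^ r := le_trans (by omega) hnnr
    have h8 : 3 * n ^ r ≤ L * d.choose r := by
      calc 3 * n ^ r ≤ 3 * (K * d.choose r) := by omega
        _ = L * d.choose r := by rw [hL]; ring
    have h9 : L * (d.choose r - m) + L * m = L * d.choose r := by
      rw [← Nat.mul_add]
      congr 1
      omega
    omega
  set A := (Finset.univ : Finset (Fin n)).filter (fun v : Fin n => n - d ≤ (v : ℕ)) with hA
  have hAcard : A.card = d := by
    rw [hA, card_filter_val_ge]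
    omega
  obtain ⟨E, hEsub, hclean, hElarge⟩ :=
    exists_clean r m L T (by omega) (by omega) hL1 A
      (hmT) (by rw [hAcard]; exact hTN) (by rw [hAcard]; exact hmCd)
      (by rw [hAcard]; exact hmaster)
  have hEcard : n.choose (r-1) ≤ E.card := by omega
  intro e he harrow
  set x := Nat.findGreatest (fun z => z.choose r ≤ e) n with hx
  have hx_le : x.choose r ≤ e := by
    have h0 : (fun z => z.choose r ≤ e) 0 := by
      simp only [Nat.choose_eq_zero_of_lt (show 0 < r by omega)]
      omega
    have := Nat.findGreatest_spec (P := fun z => z.choose r ≤ e) (Nat.zero_le n) h0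
    simpa [← hx] using this
  have hxn : x ≤ n := Nat.findGreatest_le n
  have h21 : 2 * (n / 2) + n % 2 = n := Nat.div_add_mod n 2
  have h22 : n % 2 < 2 := Nat.mod_lt n (by omega)
  have hrnd : r ≤ n - d := by omega
  have hxd : x ≤ n - d := by
    by_contra hcon
    push_neg at hcon
    have h1 : (n - d + 1).choose r ≤ x.choose r := Nat.choose_le_choose r (by omega)
    have h2 : (n - d + 1).choose r = (n - d).choose (r-1) + (n - d).choose r := by
      have := Nat.choose_succ_succ (n - d) r'
      simpa [hrdef] using this
    have h3 : 0 < (n - d).choose (r-1) := Nat.choose_pos (by omega)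
    have h4 : e ≤ (n - d).choose r := he
    omega
  set t := e - x.choose r with ht
  have hxlt : x + 1 ≤ n := by omega
  have hgr : ¬ (x+1).choose r ≤ e := by
    have := Nat.findGreatest_is_greatest (P := fun z => z.choose r ≤ e)
      (n := n) (k := x + 1) (by omega) hxlt
    simpa using this
  have hsucc : (x + 1).choose r = x.choose (r-1) + x.choose r := by
    have := Nat.choose_succ_succ x r'
    simpa [hrdef] using this
  have htlt : t < x.choose (r-1) := by omega
  have htE : t ≤ E.card := by
    have : x.choose (r-1) ≤ n.choose (r-1) := Nat.choose_le_choose _ hxn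
    omega
  obtain ⟨Et, hEtsub, hEtcard⟩ := Finset.exists_subset_card_eq htE
  apply hnot
  have hEt_mem : ∀ s ∈ Et, s ∈ A.powersetCard r := fun s hs => hEsub (hEtsub hs)
  refine construct hr (by omega) hxn Et ?_ ?_ (hclean.mono hEtsub) ?_
  · intro s hs
    exact (Finset.mem_powersetCard.1 (hEt_mem s hs)).2
  · intro s hs v hv
    have := (Finset.mem_powersetCard.1 (hEt_mem s hs)).1 hv
    rw [hA, Finset.mem_filter] at this
    omega
  · have : x.choose r + Et.card = e := by rw [hEtcard]; omega
    rw [this]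
    exact harrow


lemma choose_sub_le (r : ℕ) (hr : 1 ≤ r) (n : ℕ) :
    ∀ d, n.choose r ≤ (n - d).choose r + d * n.choose (r - 1) := by
  intro d
  induction d with
  | zero => simp
  | succ d ih =>
    have step : (n - d).choose r ≤ (n - (d+1)).choose r + n.choose (r-1) := by
      rcases Nat.eq_zero_or_pos (n - d) with h0 | hpos
      · rw [h0, Nat.choose_eq_zero_of_lt (by omega)]
        omega
      · have hw : n - d = (n - (d+1)) + 1 := by omega
        have hsucc : ((n - (d+1)) + 1).choose r
            = (n - (d+1)).choose (r-1) + (n - (d+1)).choose r := by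
          obtain ⟨r', rfl⟩ : ∃ r', r = r' + 1 := ⟨r - 1, by omega⟩
          simpa using Nat.choose_succ_succ (n - (d+1)) r'
        have hmono : (n - (d+1)).choose (r-1) ≤ n.choose (r-1) :=
          Nat.choose_le_choose _ (by omega)
        rw [hw, hsucc]
        omega
    calc n.choose r ≤ (n - d).choose r + d * n.choose (r-1) := ih
      _ ≤ ((n - (d+1)).choose r + n.choose (r-1)) + d * n.choose (r-1) := by omega
      _ = (n - (d+1)).choose r + (d+1) * n.choose (r-1) := by ring

lemma count_bound (r m f q n : ℕ) (hr : 3 ≤ r) (hq : 2 ≤ q) (hn : 2*r + 1 ≤ n)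
    (hfail : ∀ e, e ≤ (n - n / q).choose r → ¬ PairArrows r n e m f) :
    q * ((Finset.range (n.choose r + 1)).filter (fun e => PairArrows r n e m f)).card
      ≤ 2 * r * n.choose r := by
  classical
  set d := n / q with hd
  have hsub : (Finset.range (n.choose r + 1)).filter (fun e => PairArrows r n e m f)
      ⊆ Finset.Ioc ((n - d).choose r) (n.choose r) := by
    intro e he
    rw [Finset.mem_filter, Finset.mem_range] at he
    rw [Finset.mem_Ioc]
    refine ⟨?_, by omega⟩
    by_contra hcon
    push_neg at hcon
    exact hfail e hcon he.2
  have hcard : ((Finset.range (n.choose r + 1)).filter (fun e => PairArrows r n e m f)).card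
      ≤ n.choose r - (n - d).choose r := by
    have := Finset.card_le_card hsub
    rwa [Nat.card_Ioc] at this
  have hkey := choose_sub_le r (by omega) n d
  have hqd : q * d ≤ n := by
    have h := Nat.div_add_mod n q
    rw [← hd] at h
    omega
  have h1 : q * ((Finset.range (n.choose r + 1)).filter (fun e => PairArrows r n e m f)).card
      ≤ (q * d) * n.choose (r-1) := by
    calc q * _ ≤ q * (d * n.choose (r-1)) := Nat.mul_le_mul_left q (by omega)
      _ = (q * d) * n.choose (r-1) := by ring
  have h2 : (q * d) * n.choose (r-1) ≤ n * n.choose (r-1) := Nat.mul_le_mul_right _ hqd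
  have h3 : (n+1) * n.choose (r-1) = (n+1).choose r * r := by
    have h := Nat.add_one_mul_choose_eq n (r-1)
    have hr1 : r - 1 + 1 = r := by omega
    simp only [Nat.succ_eq_add_one, hr1] at h
    exact h
  have h4 : (n+1).choose r = n.choose (r-1) + n.choose r := by
    obtain ⟨r', rfl⟩ : ∃ r', r = r' + 1 := ⟨r - 1, by omega⟩
    simpa using Nat.choose_succ_succ n r'
  have h5 : n.choose (r-1) ≤ n.choose r := by
    have hhalf : r - 1 < n / 2 := by
      have := Nat.div_add_mod n 2
      have : n % 2 < 2 := Nat.mod_lt n (by omega)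
      omega
    have := Nat.choose_le_succ_of_lt_half_left hhalf
    have hr1 : r - 1 + 1 = r := by omega
    rwa [hr1] at this
  have h6 : n * n.choose (r-1) ≤ 2 * r * n.choose r := by
    have e1 : n * n.choose (r-1) ≤ (n+1) * n.choose (r-1) := by
      exact Nat.mul_le_mul_right _ (by omega)
    have e2 : (n+1).choose r * r ≤ (n.choose (r-1) + n.choose r) * r := by rw [h4]
    nlinarith [h3, h5]
  omega

lemma sigma_zero (r m f : ℕ) (hr : 3 ≤ r) (hm : r ≤ m)
    (hnot : ¬(CliquePlusFew r m f ∧ ∃ x ≤ m, x.choose r ≤ f ∧ f < x.choose r + m)) :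
    sigmaR r m f = 0 := by
  have htend : Filter.Tendsto (fun n : ℕ =>
      (((Finset.range (n.choose r + 1)).filter (fun e => PairArrows r n e m f)).card : ℝ) /
        (n.choose r : ℝ)) Filter.atTop (nhds 0) := by
    rw [Metric.tendsto_atTop]
    intro ε hε
    set q : ℕ := ⌈(2*r : ℝ)/ε⌉₊ + 2 with hqdef
    have hq2 : 2 ≤ q := by omega
    obtain ⟨N0, hN0⟩ := main_bound r m f hr hm hnot q hq2
    refine ⟨max N0 (2*r + 1), ?_⟩
    intro n hn
    have hnN0 : N0 ≤ n := le_trans (le_max_left _ _) hn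
    have hn2r : 2*r + 1 ≤ n := le_trans (le_max_right _ _) hn
    have hkey := count_bound r m f q n hr hq2 hn2r (hN0 n hnN0)
    have hCpos : 0 < n.choose r := Nat.choose_pos (by omega)
    set c := ((Finset.range (n.choose r + 1)).filter (fun e => PairArrows r n e m f)).card
      with hc
    rw [Real.dist_eq, sub_zero, abs_of_nonneg (by positivity)]
    have hqpos : (0:ℝ) < q := by positivity
    have hCposR : (0:ℝ) < (n.choose r : ℝ) := by exact_mod_cast hCpos
    have hratio : (c : ℝ) / (n.choose r : ℝ) ≤ (2*r : ℝ) / q := by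
      rw [div_le_div_iff₀ hCposR hqpos]
      have : (q : ℝ) * c ≤ 2 * r * (n.choose r : ℝ) := by exact_mod_cast hkey
      linarith
    have hqlt : (2*r : ℝ) / q < ε := by
      have hceil : (2*r : ℝ)/ε ≤ (⌈(2*r : ℝ)/ε⌉₊ : ℝ) := Nat.le_ceil _
      have hqgt : (2*r : ℝ)/ε < q := by
        rw [hqdef]
        push_cast
        linarith
      rw [div_lt_iff₀ hqpos]
      calc (2*r : ℝ) = ((2*r)/ε) * ε := by field_simp
        _ < q * ε := by
            apply mul_lt_mul_of_pos_right hqgt hε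
        _ = ε * q := by ring
    linarith
  rw [sigmaR]
  exact htend.limsup_eq


end SigmaZeroAux

theorem sigma_zero_of_not_cliquePlusFew (r m f : ℕ) (hr : 3 ≤ r) (hm : r ≤ m)
    (hf : f ≤ m.choose r) :
    (¬ CliquePlusFew r m f → sigmaR r m f = 0) ∧
    ((¬ ∃ x ≤ m, x.choose r ≤ f ∧ f < x.choose r + m) → sigmaR r m f = 0) := by
  constructor
  · intro h
    exact SigmaZeroAux.sigma_zero r m f hr hm (fun hc => h hc.1)
  · intro h
    exact SigmaZeroAux.sigma_zero r m f hr hm (fun hc => h hc.2)
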